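/- For all natural numbers p and q with p − q ≡ 1 (mod 8) (so p + q is odd), the real Clifford algebra C(p,q) admits two inequivalent irreducible representations: there exist two simple C(p,q)-modules that are not isomorphic as C(p,q)-modules. -/

import Mathlib

/-- The quadratic form `Q_{p,q}` on `ℝ^(p+q)`:
`Q_{p,q}(x) = ∑_{i<p} x_i² − ∑_{p≤i<p+q} x_i²`. -/
noncomputable def Qpq (p q : ℕ) : QuadraticForm ℝ (Fin (p + q) → ℝ) :=
  QuadraticMap.weightedSumSquares ℝ (fun i : Fin (p + q) => if (i : ℕ) < p then (1 : ℝ) else -1)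

/-- The real Clifford algebra `C(p,q)`. -/
noncomputable abbrev RealCliffordAlgebra (p q : ℕ) := CliffordAlgebra (Qpq p q)


section Twist
variable {A : Type*} [Ring A] (σ : A ≃+* A)

/-- Type copy of `M` with `A`-action twisted by `σ`. -/
def Tw (_σ : A ≃+* A) (M : Type*) := M

variable {M : Type*} [AddCommGroup M] [Module A M]

instance : AddCommGroup (Tw σ M) := inferInstanceAs (AddCommGroup M)
instance : Module A (Tw σ M) := Module.compHom M (σ : A →+* A)

/-- identity map as additive equiv -/
def twEquiv : M ≃+ Tw σ M := AddEquiv.refl M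

lemma tw_smul (r : A) (x : Tw σ M) :
    (twEquiv σ).symm (r • x) = σ r • ((twEquiv σ).symm x : M) := rfl

/-- Submodules of the twisted module correspond to submodules. -/
def twSubmoduleIso : Submodule A (Tw σ M) ≃o Submodule A M where
  toFun S :=
    { carrier := {m : M | twEquiv σ m ∈ S}
      add_mem' := fun {a b} ha hb => by
        exact S.add_mem ha hb
      zero_mem' := by simpa using S.zero_mem
      smul_mem' := fun r m hm => by
        have : (σ.symm r) • (twEquiv σ m : Tw σ M) ∈ S := S.smul_mem _ hm
        have h2 : (twEquiv σ).symm ((σ.symm r) • (twEquiv σ m : Tw σ M)) = r • m := by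
          rw [tw_smul]; simp
        simpa [Set.mem_setOf_eq, ← h2] using this }
  invFun T :=
    { carrier := {x : Tw σ M | ((twEquiv σ).symm x : M) ∈ T}
      add_mem' := fun {a b} ha hb => by
        exact T.add_mem ha hb
      zero_mem' := by simpa using T.zero_mem
      smul_mem' := fun r x hx => by
        have := T.smul_mem (σ r) hx
        exact this }
  left_inv S := by ext x; exact Iff.rfl
  right_inv T := by ext m; exact Iff.rfl
  map_rel_iff' {S S'} := by
    constructor
    · intro hle x hx
      have : ((twEquiv σ).symm x : M) ∈ _ := hle (show ((twEquiv σ).symm x : M) ∈ _ from hx)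
      exact this
    · intro hle m hm
      exact hle hm

lemma tw_isSimple [IsSimpleModule A M] : IsSimpleModule A (Tw σ M) :=
  { toIsSimpleOrder := (twSubmoduleIso σ (M := M)).isSimpleOrder }

attribute [irreducible] Tw

end Twist

section Sign
variable {A : Type*} {M : Type*} [Ring A] [AddCommGroup M] [Module A M]

theorem central_invol_sign [IsSimpleModule A M] (z : A)
    (hz : ∀ r, z * r = r * z) (hz2 : z * z = 1) :
    (∀ m : M, z • m = m) ∨ (∀ m : M, z • m = -m) := by
  let g : M →ₗ[A] M :=
    { toFun := fun m => z • m + m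
      map_add' := fun a b => by show z • (a+b) + (a+b) = _; rw [smul_add]; abel
      map_smul' := fun r m => by
        show z • (r • m) + r • m = r • (z • m + m)
        rw [smul_smul, hz r, mul_smul, smul_add] }
  rcases eq_bot_or_eq_top (LinearMap.ker g) with hb | ht
  · left
    intro m
    have hmem : z • m - m ∈ LinearMap.ker g := by
      simp only [LinearMap.mem_ker, LinearMap.coe_mk, AddHom.coe_mk, g]
      rw [smul_sub, smul_smul, hz2, one_smul]
      abel
    rw [hb, Submodule.mem_bot] at hmem
    exact sub_eq_zero.mp hmem
  · right
    intro m
    have : g m = 0 := by rw [← LinearMap.mem_ker, ht]; trivial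
    have h0 : z • m + m = 0 := this
    exact eq_neg_of_add_eq_zero_left h0
end Sign

open CliffordAlgebra

variable (p q : ℕ)

/-- the `k`-th generator of the Clifford algebra -/
noncomputable def cv (k : ℕ) : CliffordAlgebra (Qpq p q) :=
  if h : k < p + q then ι (Qpq p q) (Pi.single (⟨k, h⟩ : Fin (p + q)) 1) else 0

/-- partial products of generators -/
noncomputable def cP (k : ℕ) : CliffordAlgebra (Qpq p q) :=
  ((List.range k).map (cv p q)).prod

lemma cP_succ (k : ℕ) : cP p q (k + 1) = cP p q k * cv p q k := by
  simp [cP, List.range_succ]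

lemma Qpq_single (i : Fin (p + q)) :
    Qpq p q (Pi.single i 1) = if (i : ℕ) < p then (1 : ℝ) else -1 := by
  simp [Qpq, Pi.single_apply]

lemma Qpq_ortho {i j : Fin (p + q)} (hij : i ≠ j) :
    (Qpq p q).IsOrtho (Pi.single i 1) (Pi.single j 1) := by
  rw [QuadraticMap.isOrtho_def]
  simp only [Qpq, QuadraticMap.weightedSumSquares_apply, Pi.add_apply, Pi.single_apply]
  rw [← Finset.sum_add_distrib]
  refine Finset.sum_congr rfl fun k _ => ?_
  by_cases hki : k = i <;> by_cases hkj : k = j <;>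
    simp_all <;> ring

lemma cv_sq {k : ℕ} (hk : k < p + q) :
    cv p q k * cv p q k = algebraMap ℝ _ (if k < p then (1 : ℝ) else -1) := by
  rw [cv, dif_pos hk, ι_sq_scalar, Qpq_single]

lemma cv_anti {k l : ℕ} (hk : k < p + q) (hl : l < p + q) (hkl : k ≠ l) :
    cv p q k * cv p q l = -(cv p q l * cv p q k) := by
  rw [cv, cv, dif_pos hk, dif_pos hl]
  exact ι_mul_ι_comm_of_isOrtho (Qpq_ortho p q (by simpa using hkl))

/-- moving a generator through a partial product -/
lemma cv_mul_cP {j : ℕ} (hj : j < p + q) :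
    ∀ k, k ≤ p + q →
      cv p q j * cP p q k =
        (if j < k then (-1 : ℝ) ^ (k - 1) else (-1 : ℝ) ^ k) • (cP p q k * cv p q j)
  | 0, _ => by simp [cP]
  | (k + 1), hk => by
    have hk' : k ≤ p + q := Nat.le_of_succ_le hk
    rw [cP_succ, ← mul_assoc, cv_mul_cP hj k hk', smul_mul_assoc, mul_assoc]
    by_cases hjk : j = k
    · subst hjk
      rw [if_neg (lt_irrefl j), if_pos (Nat.lt_succ_self j)]
      simp [mul_assoc]
    · rw [cv_anti p q hj (lt_of_lt_of_le (Nat.lt_succ_self k) hk) hjk, mul_neg, smul_neg,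
        ← neg_smul, ← mul_assoc]
      by_cases hjlt : j < k
      · obtain ⟨m, rfl⟩ : ∃ m, k = m + 1 := ⟨k - 1, by omega⟩
        rw [if_pos hjlt, if_pos (by omega), Nat.add_sub_cancel, Nat.add_sub_cancel, pow_succ]
        congr 1
        ring
      · rw [if_neg hjlt, if_neg (by omega), pow_succ]
        congr 1
        ring

lemma cP_sq : ∀ k, k ≤ p + q →
    cP p q k * cP p q k =
      algebraMap ℝ _ ((-1 : ℝ) ^ (∑ i ∈ Finset.range k, i) *
        ∏ i ∈ Finset.range k, (if i < p then (1 : ℝ) else -1))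
  | 0, _ => by simp [cP]
  | (k + 1), hk => by
    have hk' : k ≤ p + q := Nat.le_of_succ_le hk
    have hklt : k < p + q := hk
    rw [cP_succ, mul_assoc, ← mul_assoc (cv p q k), cv_mul_cP p q hklt k hk',
      if_neg (lt_irrefl k), smul_mul_assoc, mul_smul_comm, mul_assoc, cv_sq p q hklt,
      ← mul_assoc, cP_sq k hk', ← map_mul, Algebra.smul_def, ← map_mul,
      Finset.sum_range_succ, Finset.prod_range_succ, pow_add]
    congr 1
    ring

/-- the pseudoscalar -/
noncomputable def cOmega : CliffordAlgebra (Qpq p q) := cP p q (p + q)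

lemma cOmega_comm_cv {j : ℕ} (hj : j < p + q) (hodd : (p + q) % 2 = 1) :
    cv p q j * cOmega p q = cOmega p q * cv p q j := by
  rw [cOmega, cv_mul_cP p q hj (p + q) le_rfl, if_pos hj]
  have : Even (p + q - 1) := Nat.Odd.sub_odd (Nat.odd_iff.mpr hodd) odd_one
  rw [this.neg_one_pow, one_smul]

lemma cOmega_comm (hodd : (p + q) % 2 = 1) (a : CliffordAlgebra (Qpq p q)) :
    cOmega p q * a = a * cOmega p q := by
  induction a using CliffordAlgebra.induction with
  | algebraMap r => rw [Algebra.commutes]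
  | ι m =>
    have hm : m = ∑ i : Fin (p + q), m i • (Pi.single i (1 : ℝ) : Fin (p + q) → ℝ) := by
      ext j
      simp [Pi.single_apply]
    rw [hm, map_sum, Finset.mul_sum, Finset.sum_mul]
    refine Finset.sum_congr rfl fun i _ => ?_
    rw [map_smul, mul_smul_comm, smul_mul_assoc]
    congr 1
    have : ι (Qpq p q) (Pi.single i (1:ℝ)) = cv p q i := by
      rw [cv, dif_pos i.isLt]
    rw [this, cOmega_comm_cv p q i.isLt hodd]
  | mul a b ha hb => rw [← mul_assoc, ha, mul_assoc, hb, mul_assoc]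
  | add a b ha hb => rw [mul_add, add_mul, ha, hb]

lemma involute_cP : ∀ k, involute (cP p q k) = (-1 : ℝ) ^ k • cP p q k
  | 0 => by simp [cP]
  | (k + 1) => by
    have hcv : involute (cv p q k) = -(cv p q k) := by
      by_cases hk : k < p + q
      · rw [cv, dif_pos hk, involute_ι]
      · rw [cv, dif_neg hk]; simp
    rw [cP_succ, map_mul, involute_cP k, hcv, pow_succ]
    rw [mul_neg, smul_mul_assoc]
    module

lemma prod_signs : ∀ q' : ℕ,
    (∏ i ∈ Finset.range (p + q'), (if i < p then (1 : ℝ) else -1)) = (-1 : ℝ) ^ q'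
  | 0 => by
    rw [pow_zero]
    exact Finset.prod_eq_one fun i hi => if_pos (Finset.mem_range.mp hi)
  | (q' + 1) => by
    rw [← Nat.add_assoc, Finset.prod_range_succ, prod_signs q', if_neg (by omega), pow_succ]

lemma cOmega_sq (h : ((p : ℤ) - q) % 8 = 1) : cOmega p q * cOmega p q = 1 := by
  rw [cOmega, cP_sq p q (p + q) le_rfl, prod_signs p q, ← pow_add]
  have hS : (∑ i ∈ Finset.range (p + q), i) * 2 = (p + q) * (p + q - 1) :=
    Finset.sum_range_id_mul_two (p + q)
  obtain ⟨m, hm⟩ : ∃ m, p + q = 2 * m + 1 := ⟨(p + q - 1) / 2, by omega⟩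
  have hmq : m % 2 = q % 2 := by omega
  have hS2 : (∑ i ∈ Finset.range (p + q), i) = (2 * m + 1) * m := by
    have h2 : (∑ i ∈ Finset.range (p + q), i) * 2 = ((2 * m + 1) * m) * 2 := by
      rw [hS, hm]
      have h3 : 2 * m + 1 - 1 = 2 * m := by omega
      rw [h3]; ring
    omega
  have heven : Even ((∑ i ∈ Finset.range (p + q), i) + q) := by
    rw [hS2, show (2 * m + 1) * m = 2 * (m * m) + m from by ring, Nat.even_iff]
    omega
  rw [heven.neg_one_pow, map_one]

lemma involute_cOmega (hodd : (p + q) % 2 = 1) :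
    involute (cOmega p q) = -cOmega p q := by
  rw [cOmega, involute_cP, (Nat.odd_iff.mpr hodd).neg_one_pow, neg_smul, one_smul]

section NoIso
variable {A : Type*} [Ring A]

theorem no_iso (σ : A ≃+* A) (z : A) (hz : ∀ r, z * r = r * z) (hz2 : z * z = 1)
    (hσz : σ z = -z) (M : Type*) [AddCommGroup M] [Module A M] [IsSimpleModule A M]
    (htwo : ∀ x : M, x + x = 0 → x = 0) :
    IsEmpty (M ≃ₗ[A] Tw σ M) := by
  constructor
  intro e
  have hnt : Nontrivial M := IsSimpleModule.nontrivial A M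
  obtain ⟨m0, hm0⟩ := exists_ne (0 : M)
  have htw : ∀ x : Tw σ M, (twEquiv σ (M := M)).symm (z • x) =
      -(z • (twEquiv σ (M := M)).symm x) := fun x => by
    rw [tw_smul, hσz, neg_smul]
  have key : ∀ m : M, (twEquiv σ (M := M)).symm (e m) = 0 := by
    intro m
    have hmain : (twEquiv σ (M := M)).symm (e m) = -((twEquiv σ (M := M)).symm (e m)) := by
      rcases central_invol_sign (M := M) z hz hz2 with h1 | h2
      · have step : (twEquiv σ (M := M)).symm (e (z • m)) =
            -(z • (twEquiv σ (M := M)).symm (e m)) := by rw [map_smul]; exact htw _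
        rw [h1 m, h1 _] at step
        exact step
      · have step : (twEquiv σ (M := M)).symm (e (z • m)) =
            -(z • (twEquiv σ (M := M)).symm (e m)) := by rw [map_smul]; exact htw _
        rw [h2 m, map_neg, map_neg, h2 _, neg_neg] at step
        exact step.symm
    exact htwo _ (add_eq_zero_iff_eq_neg.mpr hmain)
  have : e m0 = 0 := by
    have h := key m0
    have h0 : (twEquiv σ (M := M)).symm (e m0) = (twEquiv σ (M := M)).symm 0 := by
      rw [h, map_zero]
    exact (twEquiv σ (M := M)).symm.injective h0
  exact hm0 (e.map_eq_zero_iff.mp this)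

theorem no_iso_of_equiv (σ : A ≃+* A) (z : A) (hz : ∀ r, z * r = r * z) (hz2 : z * z = 1)
    (hσz : σ z = -z) (M W : Type*) [AddCommGroup M] [Module A M]
    [AddCommGroup W] [Module A W] [IsSimpleModule A W] (f : M ≃ₗ[A] W)
    (htwo : ∀ x : W, x + x = 0 → x = 0) :
    IsEmpty (M ≃ₗ[A] Tw σ W) :=
  ⟨fun e => (no_iso σ z hz hz2 hσz W htwo).false (f.symm.trans e)⟩

end NoIso

/-- For `p − q ≡ 1 (mod 8)`, the real Clifford algebra `C(p,q)` admits two inequivalent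
irreducible representations: there exist two simple `C(p,q)`-modules which are not
isomorphic. -/
theorem real_clifford_two_simple_modules (p q : ℕ) (h : ((p : ℤ) - q) % 8 = 1) :
    ∃ M N : ModuleCat (RealCliffordAlgebra p q),
      IsSimpleModule (RealCliffordAlgebra p q) M ∧
      IsSimpleModule (RealCliffordAlgebra p q) N ∧
      IsEmpty (M ≃ₗ[RealCliffordAlgebra p q] N) := by

  have hodd : (p + q) % 2 = 1 := by omega
  set A := RealCliffordAlgebra p q with hA
  obtain ⟨I, hI⟩ := Ideal.exists_maximal A
  haveI hsimp : IsSimpleModule A (A ⧸ I) :=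
    isSimpleModule_iff_isCoatom.mpr (Ideal.isMaximal_def.mp hI)
  set σ : A ≃+* A := (involuteEquiv (Q := Qpq p q)).toRingEquiv with hσ
  have hz : ∀ r : A, cOmega p q * r = r * cOmega p q := cOmega_comm p q hodd
  have hz2 : cOmega p q * cOmega p q = 1 := cOmega_sq p q h
  have hσz : σ (cOmega p q) = -(cOmega p q) := involute_cOmega p q hodd
  have htwo : ∀ x : A ⧸ I, x + x = 0 → x = 0 := by
    intro x hx
    have h2x : (2 : A) • x = 0 := by rw [two_smul]; exact hx
    have hmm : ((algebraMap ℝ A) (1/2) * (2 : A)) • x = 0 := by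
      rw [mul_smul, h2x, smul_zero]
    have hh : (algebraMap ℝ A) (1/2) * (2 : A) = 1 := by
      rw [show (2 : A) = algebraMap ℝ A 2 from by rw [map_ofNat], ← map_mul]
      norm_num
    rwa [hh, one_smul] at hmm
  refine ⟨ModuleCat.of A (ULift (A ⧸ I)), ModuleCat.of A (Tw σ (ULift (A ⧸ I))), ?_, ?_, ?_⟩
  · exact IsSimpleModule.congr (ULift.moduleEquiv : ULift (A ⧸ I) ≃ₗ[A] (A ⧸ I))
  · haveI : IsSimpleModule A (ULift (A ⧸ I)) :=
      IsSimpleModule.congr (ULift.moduleEquiv : ULift (A ⧸ I) ≃ₗ[A] (A ⧸ I))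
    exact tw_isSimple σ
  · haveI : IsSimpleModule A (ULift (A ⧸ I)) :=
      IsSimpleModule.congr (ULift.moduleEquiv : ULift (A ⧸ I) ≃ₗ[A] (A ⧸ I))
    exact no_iso_of_equiv σ (cOmega p q) hz hz2 hσz _ _
      ((ULift.moduleEquiv : ULift (A ⧸ I) ≃ₗ[A] (A ⧸ I)).trans
        (ULift.moduleEquiv : ULift (A ⧸ I) ≃ₗ[A] (A ⧸ I)).symm)
      (fun x hx => ULift.ext _ _ (htwo _ (congrArg ULift.down hx)))
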